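/- Let a, b, c, m, ν, γ, r, δ, λ_h, λ_v be positive real numbers, let α ∈ (0,1], set A = ν^α + r^α + λ_h^α + δ^α and R_0 = √(a^{2α}·b·m·c/(λ_v^α·A)), and let J₀ be the 5×5 real matrix [[−λ_h^α, ν^α+δ^α, γ^α, 0, −a^α·b·m], [0, −A, 0, 0, a^α·b·m], [0, r^α, −(λ_h^α+γ^α), 0, 0], [0, −a^α·c, 0, −λ_v^α, 0], [0, a^α·c, 0, 0, −λ_v^α]]. If R_0 < 1, then every complex root z of the characteristic polynomial of J₀ satisfies Re(z) < 0, and consequently |arg(z)| > α·π/2. (Local asymptotic stability of the disease-free equilibrium when R_0 < 1.) -/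

import Mathlib

open Polynomial

set_option maxRecDepth 20000

private theorem det5_aux (z L V Aa g nd ng nb ra abm ac : ℂ) :
    (!![z + L, nd, ng, 0, nb;
        0, z + Aa, 0, 0, -abm;
        0, ra, z + L + g, 0, 0;
        0, ac, 0, z + V, 0;
        0, -ac, 0, 0, z + V] : Matrix (Fin 5) (Fin 5) ℂ).det
      = (z + L) * (z + L + g) * (z + V) * ((z + Aa) * (z + V) - abm * ac) := by
  simp [Matrix.det_succ_row_zero, Fin.sum_univ_succ, Matrix.submatrix, Fin.succAbove,
    show ((1:Fin 4) < Fin.succ 2) by decide, show (¬ (1:Fin 4) < Fin.castSucc 0) by decide,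
    show ((1:Fin 4) < Fin.succ 1) by decide,
    show (Fin.castSucc (2 : Fin 3) = (2 : Fin 4)) from rfl,
    show ((2:Fin 4) < Fin.succ 2) by decide, Matrix.cons_val_two, Matrix.tail_cons]
  ring

/-- Local asymptotic stability of the disease-free equilibrium when `R₀ < 1`:
every complex eigenvalue `z` of the Jacobian `J₀` satisfies `Re z < 0`, and
consequently `|arg z| > α·π/2`. -/
theorem dfe_locally_asymptotically_stable
    (a b c m ν γ r δ lh lv α : ℝ)
    (ha : 0 < a) (hb : 0 < b) (hc : 0 < c) (hm : 0 < m) (hν : 0 < ν)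
    (hγ : 0 < γ) (hr : 0 < r) (hδ : 0 < δ) (hlh : 0 < lh) (hlv : 0 < lv)
    (hα : α ∈ Set.Ioc (0 : ℝ) 1)
    (A : ℝ) (hA : A = ν ^ α + r ^ α + lh ^ α + δ ^ α)
    (R₀ : ℝ) (hR₀ : R₀ = Real.sqrt (a ^ (2 * α) * b * m * c / (lv ^ α * A)))
    (J₀ : Matrix (Fin 5) (Fin 5) ℝ)
    (hJ₀ : J₀ = !![-lh ^ α, ν ^ α + δ ^ α, γ ^ α, 0, -(a ^ α * b * m);
                   0, -A, 0, 0, a ^ α * b * m;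
                   0, r ^ α, -(lh ^ α + γ ^ α), 0, 0;
                   0, -(a ^ α * c), 0, -lv ^ α, 0;
                   0, a ^ α * c, 0, 0, -lv ^ α])
    (hR : R₀ < 1) :
    ∀ z : ℂ, (J₀.charpoly.map (algebraMap ℝ ℂ)).IsRoot z →
      z.re < 0 ∧ α * Real.pi / 2 < |z.arg| := by
  intro z hz
  -- positivity facts
  have hL : 0 < lh ^ α := Real.rpow_pos_of_pos hlh α
  have hV : 0 < lv ^ α := Real.rpow_pos_of_pos hlv α
  have hG : 0 < γ ^ α := Real.rpow_pos_of_pos hγ α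
  have hApos : 0 < A := by
    rw [hA]; positivity
  have hKpos : 0 < (a ^ α * b * m) * (a ^ α * c) := by positivity
  -- R₀ < 1 gives K < A * lv^α
  have hKlt : (a ^ α * b * m) * (a ^ α * c) < A * lv ^ α := by
    have ha2 : (a ^ α * b * m) * (a ^ α * c) = a ^ (2 * α) * b * m * c := by
      rw [two_mul, Real.rpow_add ha]; ring
    have hq : 0 ≤ a ^ (2 * α) * b * m * c / (lv ^ α * A) := by positivity
    have h1 : a ^ (2 * α) * b * m * c / (lv ^ α * A) < 1 := by
      nlinarith [Real.sq_sqrt hq, Real.sqrt_nonneg (a ^ (2 * α) * b * m * c / (lv ^ α * A)),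
        hR₀ ▸ hR]
    have h2 : a ^ (2 * α) * b * m * c < lv ^ α * A :=
      by have := (div_lt_one (by positivity : (0:ℝ) < lv ^ α * A)).mp h1; linarith
    rw [ha2]; linarith [h2, mul_comm (lv ^ α) A]
  -- factored characteristic equation
  have key : (z + ((lh ^ α : ℝ) : ℂ)) * (z + ((lh ^ α : ℝ) : ℂ) + ((γ ^ α : ℝ) : ℂ)) *
      (z + ((lv ^ α : ℝ) : ℂ)) *
      ((z + (A : ℂ)) * (z + ((lv ^ α : ℝ) : ℂ)) -
        ((a ^ α * b * m : ℝ) : ℂ) * ((a ^ α * c : ℝ) : ℂ)) = 0 := by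
    have h0 : eval z ((J₀.map (algebraMap ℝ ℂ)).charpoly) = 0 := by
      rw [Matrix.charpoly_map]; exact hz
    have h1 : eval z ((J₀.map (algebraMap ℝ ℂ)).charpoly)
        = (((J₀.map (algebraMap ℝ ℂ)).charmatrix).map (eval z)).det := by
      have := (Polynomial.evalRingHom z).map_det (J₀.map (algebraMap ℝ ℂ)).charmatrix
      simpa [Matrix.charpoly, RingHom.mapMatrix_apply] using this
    have h2 : (((J₀.map (algebraMap ℝ ℂ)).charmatrix).map (eval z))
        = !![z + ((lh ^ α : ℝ) : ℂ), -((ν ^ α + δ ^ α : ℝ) : ℂ), -((γ ^ α : ℝ) : ℂ), 0,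
              ((a ^ α * b * m : ℝ) : ℂ);
            0, z + (A : ℂ), 0, 0, -((a ^ α * b * m : ℝ) : ℂ);
            0, -((r ^ α : ℝ) : ℂ), z + ((lh ^ α : ℝ) : ℂ) + ((γ ^ α : ℝ) : ℂ), 0, 0;
            0, ((a ^ α * c : ℝ) : ℂ), 0, z + ((lv ^ α : ℝ) : ℂ), 0;
            0, -((a ^ α * c : ℝ) : ℂ), 0, 0, z + ((lv ^ α : ℝ) : ℂ)] := by
      subst hJ₀
      ext i j
      fin_cases i <;> fin_cases j <;>
        simp [Matrix.charmatrix_apply, Matrix.map_apply, Matrix.diagonal,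
          Matrix.vecHead, Matrix.vecTail, Complex.ofReal_add] <;>
        push_cast <;> ring
    rw [h1, h2, det5_aux] at h0
    exact h0
  -- real part of z is negative
  have hre : z.re < 0 := by
    rcases mul_eq_zero.mp key with h4 | h4
    · rcases mul_eq_zero.mp h4 with h3 | h3
      · rcases mul_eq_zero.mp h3 with h2 | h2
        · have := congrArg Complex.re h2
          simp at this; linarith
        · have := congrArg Complex.re h2
          simp at this; linarith
      · have := congrArg Complex.re h3
        simp at this; linarith
    · have heq : (z + (A : ℂ)) * (z + ((lv ^ α : ℝ) : ℂ))
          = (((a ^ α * b * m) * (a ^ α * c) : ℝ) : ℂ) := by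
        rw [sub_eq_zero] at h4
        rw [h4]; push_cast; ring
      by_contra hcon
      push_neg at hcon
      have h1 : A ≤ ‖z + (A : ℂ)‖ := by
        have := Complex.re_le_norm (z + (A : ℂ))
        simp at this; linarith
      have h2 : lv ^ α ≤ ‖z + ((lv ^ α : ℝ) : ℂ)‖ := by
        have := Complex.re_le_norm (z + ((lv ^ α : ℝ) : ℂ))
        simp at this; linarith
      have h3 : A * lv ^ α ≤ ‖(z + (A : ℂ)) * (z + ((lv ^ α : ℝ) : ℂ))‖ := by
        rw [norm_mul]
        exact mul_le_mul h1 h2 (le_of_lt hV) (le_trans (le_of_lt hApos) h1)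
      rw [heq, Complex.norm_real, Real.norm_eq_abs, abs_of_pos hKpos] at h3
      linarith
  refine ⟨hre, ?_⟩
  clear key hz hJ₀
  have hz0 : z ≠ 0 := fun h => by rw [h] at hre; simp at hre
  have hpi2 : Real.pi / 2 < |z.arg| := by
    by_contra hcon
    push_neg at hcon
    have hcos : 0 ≤ Real.cos z.arg := by
      apply Real.cos_nonneg_of_mem_Icc
      constructor
      · linarith [abs_le.mp hcon |>.1]
      · linarith [abs_le.mp hcon |>.2]
    rw [Complex.cos_arg hz0] at hcos
    have habs : 0 < ‖z‖ := by
      simpa [norm_pos_iff] using hz0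
    have : z.re / ‖z‖ < 0 := div_neg_of_neg_of_pos hre habs
    linarith
  have hle : α * Real.pi / 2 ≤ Real.pi / 2 := by
    have hπ : 0 < Real.pi := Real.pi_pos
    have := mul_nonneg (sub_nonneg.mpr hα.2) hπ.le
    nlinarith
  linarith
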